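/- Fix m and let d = 2⌈log₂ m⌉ + 4 be even. Let CORR_d : F^{2^d} → F be the depth-d binary tree of gates G(x,y)=1−xy. There exists a function w : {1,...,2^d} → {1,...,m} (a wiring of inputs) such that for every x ∈ {0,1}^m ⊆ F^m in which at least 7m/8 of the coordinates equal b (for b ∈ {0,1}), the circuit CORR_d applied to (x_{w(1)},...,x_{w(2^d)}) outputs b. -/

import Mathlib

open Finset
open scoped Classical

/-- `CORR F d` is the full binary tree of depth `d` of gates `G(x,y) = 1 - x*y`,
applied to `2^d` inputs. -/
def CORR (F : Type*) [Field F] : (d : ℕ) → (Fin (2 ^ d) → F) → F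
  | 0, x => x ⟨0, by norm_num⟩
  | d + 1, x =>
      1 - CORR F d (fun i => x ⟨i, lt_of_lt_of_le i.isLt
              (Nat.pow_le_pow_right (by norm_num) (Nat.le_succ d))⟩)
          * CORR F d (fun i => x ⟨2 ^ d + i, by
              rw [pow_succ, Nat.mul_two]; exact Nat.add_lt_add_left i.isLt _⟩)

def leftIdx (d : ℕ) (i : Fin (2 ^ d)) : Fin (2 ^ (d + 1)) :=
  ⟨i, lt_of_lt_of_le i.isLt (Nat.pow_le_pow_right (by norm_num) (Nat.le_succ d))⟩

def rightIdx (d : ℕ) (i : Fin (2 ^ d)) : Fin (2 ^ (d + 1)) :=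
  ⟨2 ^ d + i, by rw [pow_succ, Nat.mul_two]; exact Nat.add_lt_add_left i.isLt _⟩

def CORRb : (d : ℕ) → (Fin (2 ^ d) → Bool) → Bool
  | 0, z => z ⟨0, by norm_num⟩
  | d + 1, z => !(CORRb d (fun i => z (leftIdx d i)) && CORRb d (fun i => z (rightIdx d i)))

lemma corr_eq_corrb (F : Type*) [Field F] :
    ∀ (d : ℕ) (z : Fin (2 ^ d) → Bool),
      CORR F d (fun k => if z k then 1 else 0) = if CORRb d z then 1 else 0
  | 0, z => rfl
  | d + 1, z => by
      show (1 : F) - CORR F d (fun i => if z (leftIdx d i) then 1 else 0)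
          * CORR F d (fun i => if z (rightIdx d i) then 1 else 0) = _
      rw [corr_eq_corrb F d (fun i => z (leftIdx d i)), corr_eq_corrb F d (fun i => z (rightIdx d i))]
      show _ = if CORRb (d+1) z then (1:F) else 0
      rw [show CORRb (d+1) z = !(CORRb d (fun i => z (leftIdx d i)) && CORRb d (fun i => z (rightIdx d i))) from rfl]
      cases CORRb d (fun i => z (leftIdx d i)) <;> cases CORRb d (fun i => z (rightIdx d i)) <;> simp

def splitEquiv (d m : ℕ) : (Fin (2 ^ (d + 1)) → Fin m) ≃ (Fin (2 ^ d) → Fin m) × (Fin (2 ^ d) → Fin m) where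
  toFun w := (fun i => w (leftIdx d i), fun i => w (rightIdx d i))
  invFun p k := if h : (k : ℕ) < 2 ^ d then p.1 ⟨k, h⟩
    else p.2 ⟨(k : ℕ) - 2 ^ d, by
      have hk := k.isLt
      have h2 : 2 ^ (d + 1) = 2 ^ d * 2 := pow_succ 2 d
      omega⟩
  left_inv w := by
    funext k
    dsimp only
    by_cases h : (k : ℕ) < 2 ^ d
    · rw [dif_pos h]; congr 1
    · rw [dif_neg h]
      exact congrArg w (Fin.ext (show 2 ^ d + ((k : ℕ) - 2 ^ d) = (k : ℕ) by omega))
  right_inv p := by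
    apply Prod.ext
    · funext i
      dsimp only
      show (if h : (i : ℕ) < 2 ^ d then p.1 ⟨i, h⟩ else _) = p.1 i
      rw [dif_pos i.isLt]
    · funext i
      dsimp only
      show (if h : 2 ^ d + (i : ℕ) < 2 ^ d then _ else p.2 ⟨2 ^ d + (i : ℕ) - 2 ^ d, _⟩) = p.2 i
      rw [dif_neg (by omega)]
      exact congrArg p.2 (Fin.ext (show 2 ^ d + (i : ℕ) - 2 ^ d = (i : ℕ) by omega))

lemma count_split {m d : ℕ} (P Q : (Fin (2 ^ d) → Fin m) → Prop)
    [DecidablePred P] [DecidablePred Q] :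
    (univ.filter fun w : Fin (2 ^ (d + 1)) → Fin m =>
        P (fun i => w (leftIdx d i)) ∧ Q (fun i => w (rightIdx d i))).card
      = (univ.filter P).card * (univ.filter Q).card := by
  rw [← Fintype.card_subtype, ← Fintype.card_subtype, ← Fintype.card_subtype]
  rw [← Fintype.card_prod]
  apply Fintype.card_congr
  exact Equiv.trans ((splitEquiv d m).subtypeEquiv
      (q := fun p => P p.1 ∧ Q p.2) fun w => Iff.rfl)
    (Equiv.subtypeProdEquivProd (p := P) (q := Q))

/-- number of wirings whose tree evaluates to `true` -/
noncomputable def Acount (m : ℕ) (y : Fin m → Bool) (d : ℕ) : ℕ :=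
  (univ.filter fun w : Fin (2 ^ d) → Fin m => CORRb d (fun k => y (w k)) = true).card

/-- number of wirings whose tree evaluates to something different from `b` -/
noncomputable def Wcount (m : ℕ) (y : Fin m → Bool) (b : Bool) (d : ℕ) : ℕ :=
  (univ.filter fun w : Fin (2 ^ d) → Fin m => CORRb d (fun k => y (w k)) ≠ b).card

lemma card_univ_wirings (m d : ℕ) :
    (univ : Finset (Fin (2 ^ d) → Fin m)).card = m ^ 2 ^ d := by
  rw [Finset.card_univ, Fintype.card_fun, Fintype.card_fin, Fintype.card_fin]

lemma Acount_le (m : ℕ) (y : Fin m → Bool) (d : ℕ) : Acount m y d ≤ m ^ 2 ^ d := by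
  rw [← card_univ_wirings m d]; exact Finset.card_filter_le _ _

lemma false_count (m : ℕ) (y : Fin m → Bool) (d : ℕ) :
    (univ.filter fun w : Fin (2 ^ (d + 1)) → Fin m =>
        CORRb (d + 1) (fun k => y (w k)) = false).card = Acount m y d * Acount m y d := by
  unfold Acount
  rw [← count_split (fun v => CORRb d (fun k => y (v k)) = true)
    (fun v => CORRb d (fun k => y (v k)) = true)]
  congr 1
  apply Finset.filter_congr
  intro w _
  show CORRb (d+1) (fun k => y (w k)) = false ↔ _
  rw [show CORRb (d+1) (fun k => y (w k)) =
    !(CORRb d (fun i => y (w (leftIdx d i))) && CORRb d (fun i => y (w (rightIdx d i)))) from rfl]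
  simp

lemma Acount_add_comp (m : ℕ) (y : Fin m → Bool) (d : ℕ) :
    Acount m y d + (univ.filter fun w : Fin (2 ^ d) → Fin m =>
      CORRb d (fun k => y (w k)) = false).card = m ^ 2 ^ d := by
  have H := Finset.card_filter_add_card_filter_not
    (s := (univ : Finset (Fin (2 ^ d) → Fin m)))
    (p := fun w => CORRb d (fun k => y (w k)) = true)
  rw [card_univ_wirings m d] at H
  have h2 : (univ.filter fun w : Fin (2 ^ d) → Fin m => ¬ CORRb d (fun k => y (w k)) = true)
      = (univ.filter fun w : Fin (2 ^ d) → Fin m => CORRb d (fun k => y (w k)) = false) := by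
    apply Finset.filter_congr; intro w _; simp
  rw [h2] at H
  unfold Acount
  exact H

lemma M_succ (m d : ℕ) : m ^ 2 ^ (d + 1) = (m ^ 2 ^ d) * (m ^ 2 ^ d) := by
  rw [pow_succ, pow_mul]; ring

lemma A_succ (m : ℕ) (y : Fin m → Bool) (d : ℕ) :
    Acount m y (d + 1) + Acount m y d * Acount m y d = (m ^ 2 ^ d) * (m ^ 2 ^ d) := by
  rw [← false_count m y d, ← M_succ]
  exact Acount_add_comp m y (d + 1)

lemma Wcount_true (m : ℕ) (y : Fin m → Bool) (d : ℕ) :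
    Acount m y d + Wcount m y true d = m ^ 2 ^ d := by
  have H := Finset.card_filter_add_card_filter_not
    (s := (univ : Finset (Fin (2 ^ d) → Fin m)))
    (p := fun w => CORRb d (fun k => y (w k)) = true)
  rw [card_univ_wirings m d] at H
  unfold Acount Wcount
  exact H

lemma Wcount_false (m : ℕ) (y : Fin m → Bool) (d : ℕ) :
    Wcount m y false d = Acount m y d := by
  unfold Acount Wcount
  congr 1
  apply Finset.filter_congr
  intro w _
  simp

lemma Wcount_two_level (m : ℕ) (y : Fin m → Bool) (b : Bool) (d : ℕ) :
    Wcount m y b (d + 2) ≤ 4 * Wcount m y b d ^ 2 * (m ^ 2 ^ d) ^ 2 := by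
  have e1 := A_succ m y d
  have e2 := A_succ m y (d + 1)
  have eM := M_succ m d
  have eM2 := M_succ m (d + 1)
  cases b
  · -- b = false : Wcount = Acount
    rw [Wcount_false, Wcount_false]
    zify at e1 e2 eM eM2 ⊢
    nlinarith [sq_nonneg ((Acount m y d : ℤ)), sq_nonneg ((Acount m y d : ℤ)^2),
      sq_nonneg ((m:ℤ) ^ 2 ^ d), sq_nonneg ((Acount m y d : ℤ) * (m:ℤ) ^ 2 ^ d)]
  · -- b = true
    have t0 := Wcount_true m y d
    have t2 := Wcount_true m y (d + 2)
    zify at e1 e2 eM eM2 t0 t2 ⊢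
    set a0 := (Acount m y d : ℤ)
    set a1 := (Acount m y (d+1) : ℤ)
    set a2 := (Acount m y (d+2) : ℤ)
    set W := (Wcount m y true d : ℤ) with hWdef
    set W2 := (Wcount m y true (d+2) : ℤ) with hW2def
    set M := ((m : ℤ) ^ 2 ^ d) with hMdef
    have hW0 : (0:ℤ) ≤ W := by rw [hWdef]; positivity
    have ha0 : (0:ℤ) ≤ a0 := Int.natCast_nonneg _
    have ha1eq : a1 = W * (M + a0) := by linear_combination e1 - (M + a0) * t0
    have hW2eq : W2 = a1 ^ 2 := by nlinarith [e2, t2, eM, eM2]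
    have h4 : (M + a0) ^ 2 ≤ (2 * M) ^ 2 := by nlinarith
    calc W2 = W ^ 2 * (M + a0) ^ 2 := by rw [hW2eq, ha1eq]; ring
      _ ≤ W ^ 2 * (2 * M) ^ 2 := by
          exact mul_le_mul_of_nonneg_left h4 (sq_nonneg W)
      _ = 4 * W ^ 2 * M ^ 2 := by ring

def funOne (m : ℕ) : (Fin (2 ^ 0) → Fin m) ≃ Fin m where
  toFun w := w ⟨0, by norm_num⟩
  invFun i _ := i
  left_inv w := by
    funext k
    exact congrArg w (Fin.ext (show 0 = (k : ℕ) by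
      have := k.isLt; norm_num at this; omega))
  right_inv i := rfl

lemma Wcount_zero (m : ℕ) (y : Fin m → Bool) (b : Bool) :
    Wcount m y b 0 = (univ.filter fun i => y i ≠ b).card := by
  unfold Wcount
  rw [← Fintype.card_subtype, ← Fintype.card_subtype]
  exact Fintype.card_congr ((funOne m).subtypeEquiv fun w => Iff.rfl)

lemma Wcount_bound (m : ℕ) (y : Fin m → Bool) (b : Bool)
    (hbase : 8 * Wcount m y b 0 ≤ m) :
    ∀ k : ℕ, 2 ^ (2 ^ k + 2) * Wcount m y b (2 * k) ≤ m ^ 2 ^ (2 * k) := by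
  intro k
  induction k with
  | zero => simpa using hbase
  | succ k ih =>
    have h2 := Wcount_two_level m y b (2 * k)
    have hidx : 2 * (k + 1) = 2 * k + 2 := by ring
    rw [hidx]
    have hM : m ^ 2 ^ (2 * k + 2) = (m ^ 2 ^ (2 * k)) ^ 4 := by
      rw [← pow_mul]
      congr 1
      rw [pow_succ, pow_succ]; ring
    have hE : 2 ^ (2 ^ (k + 1) + 2) * 4 = (2 ^ (2 ^ k + 2)) ^ 2 := by
      rw [show (4:ℕ) = 2 ^ 2 from rfl, ← pow_add, ← pow_mul]
      congr 1
      rw [pow_succ]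
      ring
    calc 2 ^ (2 ^ (k + 1) + 2) * Wcount m y b (2 * k + 2)
        ≤ 2 ^ (2 ^ (k + 1) + 2) * (4 * Wcount m y b (2 * k) ^ 2 * (m ^ 2 ^ (2 * k)) ^ 2) :=
          Nat.mul_le_mul_left _ h2
      _ = (2 ^ (2 ^ k + 2) * Wcount m y b (2 * k)) ^ 2 * (m ^ 2 ^ (2 * k)) ^ 2 := by
          rw [show 2 ^ (2 ^ (k + 1) + 2) * (4 * Wcount m y b (2 * k) ^ 2 * (m ^ 2 ^ (2 * k)) ^ 2)
            = (2 ^ (2 ^ (k + 1) + 2) * 4) * Wcount m y b (2 * k) ^ 2 * (m ^ 2 ^ (2 * k)) ^ 2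
            from by ring, hE]
          ring
      _ ≤ (m ^ 2 ^ (2 * k)) ^ 2 * (m ^ 2 ^ (2 * k)) ^ 2 :=
          Nat.mul_le_mul_right _ (Nat.pow_le_pow_left ih 2)
      _ = m ^ 2 ^ (2 * k + 2) := by rw [hM]; ring

lemma Wcount_final (m : ℕ) (y : Fin m → Bool) (b : Bool) (k : ℕ) (hk : 4 * m ≤ 2 ^ k)
    (ht : 8 * (univ.filter fun i => y i ≠ b).card ≤ m) :
    2 ^ (4 * m + 2) * Wcount m y b (2 * k) ≤ m ^ 2 ^ (2 * k) := by
  have hb := Wcount_bound m y b (by rw [Wcount_zero]; exact ht) k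
  refine le_trans (Nat.mul_le_mul_right _ ?_) hb
  exact Nat.pow_le_pow_right (by norm_num) (by omega)

/-- Valiant's trick: with `d = 2⌈log₂ m⌉ + 4`, there is a wiring `w` of the
`2^d` leaves of `CORR_d` to `m` inputs such that for every Boolean input
vector in which at least `7m/8` coordinates equal `b ∈ {0,1}`, the circuit
outputs `b`. -/
theorem stmt_15 (F : Type*) [Field F] (m : ℕ) (hm : 0 < m)
    (d : ℕ) (hd : d = 2 * Nat.clog 2 m + 4) :
    ∃ w : Fin (2 ^ d) → Fin m,
      ∀ (x : Fin m → F), (∀ i, x i = 0 ∨ x i = 1) →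
        ∀ b : F, (b = 0 ∨ b = 1) →
          (7 * (m : ℝ) / 8 ≤ (univ.filter fun i => x i = b).card) →
          CORR F d (fun k => x (w k)) = b := by
  set k := Nat.clog 2 m + 2 with hkdef
  have hd2 : d = 2 * k := by omega
  have hk : 4 * m ≤ 2 ^ k := by
    have hc : m ≤ 2 ^ Nat.clog 2 m := Nat.le_pow_clog (by norm_num) m
    have : 2 ^ k = 4 * 2 ^ Nat.clog 2 m := by rw [hkdef, pow_add]; ring
    omega
  -- the bad set of wirings
  set Bad : Finset (Fin (2 ^ d) → Fin m) :=
    univ.filter fun w => ∃ p : (Fin m → Bool) × Bool,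
      (8 * (univ.filter fun i => p.1 i ≠ p.2).card ≤ m) ∧
        CORRb d (fun j => p.1 (w j)) ≠ p.2 with hBad
  have hM0 : 0 < m ^ 2 ^ d := Nat.pow_pos hm
  -- bound the bad set
  have hcard : Bad.card < m ^ 2 ^ d := by
    set f : (Fin m → Bool) × Bool → Finset (Fin (2 ^ d) → Fin m) :=
      fun p => univ.filter fun w =>
        (8 * (univ.filter fun i => p.1 i ≠ p.2).card ≤ m) ∧
          CORRb d (fun j => p.1 (w j)) ≠ p.2 with hf
    have hsub : Bad ⊆ univ.biUnion f := by
      intro w hw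
      rw [hBad, Finset.mem_filter] at hw
      obtain ⟨-, p, hp⟩ := hw
      exact Finset.mem_biUnion.mpr ⟨p, Finset.mem_univ p, Finset.mem_filter.mpr ⟨Finset.mem_univ w, hp⟩⟩
    have hfp : ∀ p : (Fin m → Bool) × Bool, 2 ^ (4 * m + 2) * (f p).card ≤ m ^ 2 ^ d := by
      intro p
      by_cases hth : 8 * (univ.filter fun i => p.1 i ≠ p.2).card ≤ m
      · have hsub2 : f p ⊆ univ.filter fun w => CORRb d (fun j => p.1 (w j)) ≠ p.2 :=
          Finset.monotone_filter_right _ (fun w _ hw => hw.2)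
        have h1 : (f p).card ≤ Wcount m p.1 p.2 d := Finset.card_le_card hsub2
        calc 2 ^ (4 * m + 2) * (f p).card ≤ 2 ^ (4 * m + 2) * Wcount m p.1 p.2 d :=
              Nat.mul_le_mul_left _ h1
          _ ≤ m ^ 2 ^ d := by rw [hd2]; exact Wcount_final m p.1 p.2 k hk hth
      · have : f p = ∅ := Finset.filter_false_of_mem (fun w _ h => hth h.1)
        rw [this]
        simp [Nat.le_of_lt hM0, hM0.le]
    have htot : 2 ^ (4 * m + 2) * Bad.card ≤ 2 ^ (m + 1) * m ^ 2 ^ d := by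
      calc 2 ^ (4 * m + 2) * Bad.card
          ≤ 2 ^ (4 * m + 2) * (univ.biUnion f).card :=
            Nat.mul_le_mul_left _ (Finset.card_le_card hsub)
        _ ≤ 2 ^ (4 * m + 2) * ∑ p, (f p).card := by
            exact Nat.mul_le_mul_left _ (Finset.card_biUnion_le)
        _ = ∑ p : (Fin m → Bool) × Bool, 2 ^ (4 * m + 2) * (f p).card := by
            rw [Finset.mul_sum]
        _ ≤ ∑ _p : (Fin m → Bool) × Bool, m ^ 2 ^ d := Finset.sum_le_sum (fun p _ => hfp p)
        _ = 2 ^ (m + 1) * m ^ 2 ^ d := by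
            rw [Finset.sum_const, Finset.card_univ]
            simp only [Fintype.card_prod, Fintype.card_fun, Fintype.card_fin,
              Fintype.card_bool, smul_eq_mul, pow_succ]
    have hlt : 2 ^ (m + 1) * m ^ 2 ^ d < 2 ^ (4 * m + 2) * m ^ 2 ^ d := by
      exact Nat.mul_lt_mul_of_lt_of_le
        (Nat.pow_lt_pow_right (by norm_num) (by omega)) (le_refl _) hM0
    have := lt_of_le_of_lt htot hlt
    exact Nat.lt_of_mul_lt_mul_left this
  obtain ⟨w, hw⟩ : ∃ w, w ∉ Bad := by
    by_contra h
    push_neg at h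
    have hsub : (univ : Finset (Fin (2 ^ d) → Fin m)) ⊆ Bad := fun w _ => h w
    have := Finset.card_le_card hsub
    rw [card_univ_wirings] at this
    omega
  refine ⟨w, ?_⟩
  intro x hx b hb hcard7
  set y : Fin m → Bool := fun i => decide (x i = 1) with hy
  set bb : Bool := decide (b = 1) with hbbdef
  have hx' : ∀ i, x i = (if y i then (1 : F) else 0) := by
    intro i
    rcases hx i with h | h <;> simp [hy, h]
  have hbb : b = (if bb then (1 : F) else 0) := by
    rcases hb with h | h <;> simp [hbbdef, h]
  have hset : (univ.filter fun i => x i = b) = (univ.filter fun i => y i = bb) := by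
    apply Finset.filter_congr
    intro i _
    rcases hx i with h | h <;> rcases hb with h' | h' <;>
      simp [hy, hbbdef, h, h', zero_ne_one, one_ne_zero]
  have hthr : 8 * (univ.filter fun i => y i ≠ bb).card ≤ m := by
    have hc : (univ.filter fun i => y i = bb).card + (univ.filter fun i => y i ≠ bb).card = m := by
      have := Finset.card_filter_add_card_filter_not
        (s := (univ : Finset (Fin m))) (p := fun i => y i = bb)
      rwa [Finset.card_univ, Fintype.card_fin] at this
    have h7 : 7 * m ≤ 8 * (univ.filter fun i => y i = bb).card := by
      rw [← hset]
      rw [div_le_iff₀ (by norm_num : (0:ℝ) < 8)] at hcard7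
      have : (7 * m : ℝ) ≤ 8 * (univ.filter fun i => x i = b).card := by linarith
      exact_mod_cast this
    omega
  have hgood : CORRb d (fun j => y (w j)) = bb := by
    by_contra hne
    exact hw (Finset.mem_filter.mpr ⟨Finset.mem_univ w, ⟨(y, bb), hthr, hne⟩⟩)
  calc CORR F d (fun j => x (w j)) = CORR F d (fun j => if y (w j) then 1 else 0) := by
        congr 1
        funext j
        exact hx' (w j)
    _ = if CORRb d (fun j => y (w j)) then 1 else 0 := corr_eq_corrb F d (fun j => y (w j))
    _ = b := by rw [hgood, hbb]
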